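/- Let S be a finite set of planar points with pairwise distinct x- and y-coordinates, and let q be a point. A point p∈S with p.x ≤ q.x and p.y ≤ q.y is rectangularly visible from q if and only if p is a maximal point of the set S ∩ ([0,q.x]×[0,q.y]) (i.e., p is not dominated by any other point of that set). -/
import Mathlib

/-- **Rectangular visibility = maximality in the dominated quadrant.**
`S` is a finite set of planar points, `q ∉ S` a query point, and all points of
`S ∪ {q}` have pairwise distinct `x`- and `y`-coordinates and nonnegative
coordinates.  Let `p ∈ S` with `p.x ≤ q.x` and `p.y ≤ q.y`.  Then `p` is
rectangularly visible from `q` (the open axis-parallel rectangle with opposite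
corners `p` and `q` contains no point of `S`) if and only if `p` is a maximal
point of `S ∩ ([0,q.x] × [0,q.y])`, i.e. `p` is dominated by no other point of
that set. -/
theorem stmt5 (S : Finset (ℝ × ℝ)) (q p : ℝ × ℝ)
    (hq : q ∉ S)
    (hdist : ∀ r ∈ S ∪ {q}, ∀ s ∈ S ∪ {q}, r ≠ s → r.1 ≠ s.1 ∧ r.2 ≠ s.2)
    (hnonneg : ∀ r ∈ S ∪ {q}, 0 ≤ r.1 ∧ 0 ≤ r.2)
    (hp : p ∈ S) (hpx : p.1 ≤ q.1) (hpy : p.2 ≤ q.2) :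
    (∀ r ∈ S, ¬(p.1 < r.1 ∧ r.1 < q.1 ∧ p.2 < r.2 ∧ r.2 < q.2)) ↔
    (∀ r ∈ S, r.1 ≤ q.1 → r.2 ≤ q.2 → r ≠ p → ¬(p.1 ≤ r.1 ∧ p.2 ≤ r.2)) := by
  constructor
  · intro h r hr hrx hry hrp ⟨h1, h2⟩
    have hrq : r ≠ q := fun e => hq (e ▸ hr)
    have hdrp := hdist r (Finset.mem_union_left _ hr) p (Finset.mem_union_left _ hp) hrp
    have hdrq := hdist r (Finset.mem_union_left _ hr) q (Finset.mem_union_right _ (Finset.mem_singleton_self q)) hrq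
    exact h r hr ⟨lt_of_le_of_ne h1 (Ne.symm hdrp.1), lt_of_le_of_ne hrx hdrq.1,
      lt_of_le_of_ne h2 (Ne.symm hdrp.2), lt_of_le_of_ne hry hdrq.2⟩
  · intro h r hr ⟨h1, h2, h3, h4⟩
    exact h r hr h2.le h4.le (fun e => absurd (e ▸ h1) (lt_irrefl _)) ⟨h1.le, h3.le⟩
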